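/- Let θ > 1 be real and let n be a positive integer with n > log θ / log 2. Then M_θ(n) = ⌊n/log θ − 1/2⌋ or M_θ(n) = ⌊n/log θ + 1/2⌋. -/

import Mathlib

open Real

/-- `M θ n = ⌊1 / {θ^(1/n)}⌋`, the integer part of the reciprocal of the
fractional part of the `n`-th root of `θ`. -/
noncomputable def M (θ : ℝ) (n : ℕ) : ℤ := ⌊1 / Int.fract (θ ^ ((n : ℝ)⁻¹))⌋

/-- `g x = 1 / log (1 + 1/x)`. -/
noncomputable def g (x : ℝ) : ℝ := 1 / Real.log (1 + 1 / x)

lemma key_log_lb {u : ℝ} (hu : 0 < u) (hu1 : u < 1) :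
    2 * u / (2 + u) < Real.log (1 + u) := by
  set v : ℝ := 2 * u / (2 + u) with hv
  have hd : (0:ℝ) < 2 + u := by linarith
  have hv0 : 0 < v := by positivity
  have hv1 : v ≤ 2/3 := by
    rw [hv, div_le_iff₀ hd]; nlinarith
  have hexp : Real.exp v ≤ 1 + v + v^2/2 + v^3 * (2/9) := by
    have h := Real.exp_bound' hv0.le (by linarith) (n := 3) (by norm_num)
    have hsum : (∑ m ∈ Finset.range 3, v ^ m / m.factorial) = 1 + v + v^2/2 := by
      simp [Finset.sum_range_succ]
    rw [hsum] at h
    have hfac : ((Nat.factorial 3 : ℕ) : ℝ) = 6 := by norm_num [Nat.factorial]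
    calc Real.exp v ≤ 1 + v + v^2/2 + v^3 * (3+1) / (Nat.factorial 3 * 3) := by
            exact_mod_cast h
      _ = 1 + v + v^2/2 + v^3 * (2/9) := by rw [hfac]; ring
  have hlt : Real.exp v < 1 + u := by
    have hveq : v * (2 + u) = 2 * u := by
      rw [hv, div_mul_cancel₀ _ hd.ne']
    refine lt_of_le_of_lt hexp ?_
    nlinarith [sq_nonneg u, sq_nonneg v, mul_pos hu hu, pow_pos hu 3, mul_pos hd hd]
  exact (Real.lt_log_iff_exp_lt (by linarith : (0:ℝ) < 1 + u)).mpr hlt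

theorem stmt_12 (θ : ℝ) (hθ : 1 < θ) (n : ℕ) (hn : 0 < n)
    (hlog : (n : ℝ) > Real.log θ / Real.log 2) :
    M θ n = ⌊(n : ℝ) / Real.log θ - 1 / 2⌋ ∨
    M θ n = ⌊(n : ℝ) / Real.log θ + 1 / 2⌋ := by
  have hθ0 : (0:ℝ) < θ := by linarith
  have hn0 : (0:ℝ) < n := by exact_mod_cast hn
  have hlog2 : (0:ℝ) < Real.log 2 := Real.log_pos (by norm_num)
  have hlogθ : 0 < Real.log θ := Real.log_pos hθ
  set t : ℝ := θ ^ ((n : ℝ)⁻¹) with ht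
  have ht1 : 1 < t :=
    (Real.one_lt_rpow_iff_of_pos hθ0).mpr (Or.inl ⟨hθ, by positivity⟩)
  have ht2 : t < 2 := by
    have h1 : Real.log θ < (n : ℝ) * Real.log 2 := by
      rwa [gt_iff_lt, div_lt_iff₀ hlog2] at hlog
    have h2 : θ < 2 ^ (n : ℝ) := by
      have : Real.log θ < Real.log (2 ^ (n:ℝ)) := by
        rwa [Real.log_rpow (by norm_num)]
      exact (Real.log_lt_log_iff hθ0 (by positivity)).mp this
    calc t < ((2:ℝ) ^ (n:ℝ)) ^ ((n : ℝ)⁻¹) :=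
          Real.rpow_lt_rpow hθ0.le h2 (by positivity)
      _ = 2 := by
          rw [← Real.rpow_mul (by norm_num : (0:ℝ) ≤ 2),
            mul_inv_cancel₀ (ne_of_gt hn0), Real.rpow_one]
  have hlogt : Real.log t = Real.log θ / n := by
    rw [ht, Real.log_rpow hθ0]; ring
  have hlogt0 : 0 < Real.log t := by rw [hlogt]; positivity
  set u : ℝ := t - 1 with hu
  have hfract : Int.fract t = u := by
    have hfl : ⌊t⌋ = 1 := by
      rw [Int.floor_eq_iff] <;> push_cast <;> constructor <;> linarith
    rw [Int.fract, hfl]; push_cast; rw [hu]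
  have hu0 : 0 < u := by rw [hu]; linarith
  have hu1 : u < 1 := by rw [hu]; linarith
  have h1u : 1 + u = t := by rw [hu]; ring
  clear_value u
  set x : ℝ := (n : ℝ) / Real.log θ with hx
  have hxlogt : x = 1 / Real.log t := by
    rw [hlogt, hx]; field_simp
  clear_value x
  have hyx : 1 / u < x := by
    rw [hxlogt]
    apply one_div_lt_one_div_of_lt hlogt0
    have := Real.log_lt_sub_one_of_pos (by linarith : (0:ℝ) < t) (ne_of_gt ht1)
    rw [hu]
    linarith
  have hxy : x < 1 / u + 1 / 2 := by
    have hk := key_log_lb hu0 hu1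
    rw [h1u] at hk
    have h2u : 0 < 2 * u / (2 + u) := by positivity
    have hlt := one_div_lt_one_div_of_lt h2u hk
    have hune : u ≠ 0 := hu0.ne'
    have hdne : (2:ℝ) + u ≠ 0 := by positivity
    have heq : 1 / (2 * u / (2 + u)) = 1 / u + 1 / 2 := by
      rw [one_div_div]
      field_simp
    rw [hxlogt]
    rw [heq] at hlt
    exact hlt
  have hM : M θ n = ⌊1 / u⌋ := by
    rw [M, ← ht, hfract]
  have hfl1 : ⌊x - 1/2⌋ ≤ ⌊1/u⌋ := Int.floor_le_floor (by linarith)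
  have hfl2 : ⌊1/u⌋ ≤ ⌊x⌋ := Int.floor_le_floor (by linarith)
  have hfl3 : ⌊x + 1/2⌋ = ⌊x - 1/2⌋ + 1 := by
    rw [show x + 1/2 = (x - 1/2) + 1 by ring, Int.floor_add_one]
  have hfl4 : ⌊x⌋ ≤ ⌊x + 1/2⌋ := Int.floor_le_floor (by linarith)
  rw [hM]
  omega
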